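/- arXiv:2311.09956 — 2 statements merged into one kernel-verified Lean document; each statement's English description precedes it below -/
import Mathlib

section
/- Let n ≥ 1 be an integer, γ ∈ (0,∞) \ ℕ, and let j be an integer with 1 ≤ j ≤ ⌊γ/2⌋. For smooth g : (0,∞) → ℝ set Δ̃g(ρ) = ρ² g''(ρ) − (2n+1) ρ g'(ρ) + (n+1)² g(ρ). Then for every ρ > 0, ρ^{−(n+1)+γ−2j} · [ ∏_{ℓ=0}^{j−1} (Δ̃ − (γ−2ℓ)²)(Δ̃ − (γ+2ℓ−2⌊γ⌋)²) ] applied to the function ρ ↦ ρ^{n+1−γ+2j} equals the constant 4^{2j} · j! · Γ(γ+1−j) Γ(⌊γ⌋+1−j) Γ(j+1−[γ]) / ( Γ(γ+1−2j) Γ(⌊γ⌋+1−2j) Γ(1−[γ]) ). (All displayed factors commute, so the composition may be taken in any fixed order.) -/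
noncomputable section

open scoped Real

/-- The radial part of the shifted complex-hyperbolic Laplacian:
Δ̃ g (ρ) = ρ² g''(ρ) − (2n+1) ρ g'(ρ) + (n+1)² g(ρ). -/
def radOp (n : ℕ) (g : ℝ → ℝ) : ℝ → ℝ :=
  fun ρ => ρ ^ 2 * deriv (deriv g) ρ - (2 * n + 1) * ρ * deriv g ρ + ((n : ℝ) + 1) ^ 2 * g ρ

/-- Apply the product of the commuting factors (Δ̃ − c), one for each `c` in the list `cs`. -/
def radProd (n : ℕ) (cs : List ℝ) (g : ℝ → ℝ) : ℝ → ℝ :=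
  cs.foldr (fun c h => fun ρ => radOp n h ρ - c * h ρ) g

lemma eqOn_deriv {f g : ℝ → ℝ} (h : Set.EqOn f g (Set.Ioi 0)) :
    Set.EqOn (deriv f) (deriv g) (Set.Ioi 0) := fun x hx =>
  Filter.EventuallyEq.deriv_eq (Filter.eventuallyEq_of_mem (isOpen_Ioi.mem_nhds hx) h)

lemma eqOn_radOp (n : ℕ) {f g : ℝ → ℝ} (h : Set.EqOn f g (Set.Ioi 0)) :
    Set.EqOn (radOp n f) (radOp n g) (Set.Ioi 0) := by
  intro x hx
  have h1 := eqOn_deriv h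
  have h2 := eqOn_deriv h1
  simp only [radOp, h hx, h1 hx, h2 hx]

lemma deriv_K_rpow (K a : ℝ) {x : ℝ} (hx : 0 < x) :
    deriv (fun y : ℝ => K * y ^ a) x = K * a * x ^ (a - 1) := by
  have := (Real.hasDerivAt_rpow_const (x := x) (p := a) (Or.inl hx.ne')).const_mul K
  rw [this.deriv]; ring

lemma radOp_rpow (n : ℕ) (K a : ℝ) :
    Set.EqOn (radOp n (fun x => K * x ^ a))
      (fun x => ((a - n - 1) ^ 2 * K) * x ^ a) (Set.Ioi 0) := by
  intro x hx
  have hx' : (0:ℝ) < x := hx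
  have hd1 : Set.EqOn (deriv (fun y : ℝ => K * y ^ a)) (fun y => (K * a) * y ^ (a - 1))
      (Set.Ioi 0) := fun y hy => deriv_K_rpow K a hy
  have hd2 : deriv (deriv (fun y : ℝ => K * y ^ a)) x = (K * a * (a-1)) * x ^ (a - 2) := by
    rw [eqOn_deriv hd1 hx, deriv_K_rpow (K*a) (a-1) hx']
    ring_nf
  simp only [radOp, hd2, deriv_K_rpow K a hx']
  have e2 : x ^ (2:ℕ) * x ^ (a - 2) = x ^ a := by
    rw [← Real.rpow_natCast x 2, ← Real.rpow_add hx']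
    norm_num
  have e1 : x * x ^ (a - 1) = x ^ a := by
    nth_rewrite 1 [← Real.rpow_one x]
    rw [← Real.rpow_add hx']; norm_num
  calc x ^ 2 * (K * a * (a - 1) * x ^ (a - 2)) - (2 * ↑n + 1) * x * (K * a * x ^ (a - 1)) +
      (↑n + 1) ^ 2 * (K * x ^ a)
      = (K * a * (a-1)) * (x ^ (2:ℕ) * x ^ (a-2)) - ((2 * ↑n + 1) * (K * a)) * (x * x ^ (a-1))
        + (↑n + 1) ^ 2 * K * x ^ a := by ring
    _ = (a - ↑n - 1) ^ 2 * K * x ^ a := by rw [e1, e2]; ring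

lemma radProd_rpow (n : ℕ) (a : ℝ) (cs : List ℝ) :
    Set.EqOn (radProd n cs (fun x => x ^ a))
      (fun x => (cs.map (fun c => (a - n - 1) ^ 2 - c)).prod * x ^ a) (Set.Ioi 0) := by
  induction cs with
  | nil => intro x hx; simp [radProd]
  | cons c cs ih =>
      intro x hx
      have hrad := eqOn_radOp n ih
      have h2 := radOp_rpow n ((cs.map (fun c => (a - n - 1) ^ 2 - c)).prod) a
      have : radProd n (c :: cs) (fun x => x ^ a) x
          = radOp n (radProd n cs (fun x => x ^ a)) x - c * radProd n cs (fun x => x ^ a) x := rfl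
      rw [this, hrad hx, h2 hx, ih hx]
      simp only [List.map_cons, List.prod_cons]
      ring

lemma gamma_shift (x : ℝ) (m : ℕ) (hx : ∀ i : ℕ, i < m → x + i ≠ 0) :
    Real.Gamma (x + m) = (∏ i ∈ Finset.range m, (x + i)) * Real.Gamma x := by
  induction m with
  | zero => simp
  | succ m ih =>
      have : x + (m+1 : ℕ) = (x + m) + 1 := by push_cast; ring
      rw [this, Real.Gamma_add_one (hx m (Nat.lt_succ_self m)), ih (fun i hi => hx i (hi.trans (Nat.lt_succ_self m))),
        Finset.prod_range_succ]
      ring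

lemma list_prod_range (m : ℕ) (f : ℕ → ℝ) :
    ((List.range m).map f).prod = ∏ i ∈ Finset.range m, f i := by
  induction m with
  | zero => simp
  | succ m ih => rw [List.range_succ, Finset.prod_range_succ, List.map_append, List.prod_append, ih]; simp


theorem stmt1 (n : ℕ) (hn : 1 ≤ n) (γ : ℝ) (hγ0 : 0 < γ) (hγ : ∀ m : ℕ, γ ≠ m)
    (j : ℕ) (hj1 : 1 ≤ j) (hj2 : j ≤ Nat.floor (γ / 2)) :
    ∀ ρ : ℝ, 0 < ρ →
      ρ ^ (-(n : ℝ) - 1 + γ - 2 * j) *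
        radProd n
          ((List.range j).map (fun ℓ => (γ - 2 * ℓ) ^ 2) ++
            (List.range j).map (fun ℓ => (γ + 2 * ℓ - 2 * (Nat.floor γ : ℝ)) ^ 2))
          (fun x => x ^ ((n : ℝ) + 1 - γ + 2 * j)) ρ
      = 4 ^ (2 * j) * (Nat.factorial j) *
          (Real.Gamma (γ + 1 - j) * Real.Gamma ((Nat.floor γ : ℝ) + 1 - j) *
            Real.Gamma ((j : ℝ) + 1 - (γ - Nat.floor γ))) /
          (Real.Gamma (γ + 1 - 2 * j) * Real.Gamma ((Nat.floor γ : ℝ) + 1 - 2 * j) *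
            Real.Gamma (1 - (γ - Nat.floor γ))) := by
  intro ρ hρ
  set F : ℝ := (Nat.floor γ : ℝ) with hF
  -- γ is not an integer
  have hint : ∀ z : ℤ, γ ≠ (z : ℝ) := by
    intro z hz
    rcases le_or_gt 0 z with h | h
    · exact hγ z.toNat (by rw [hz]; norm_cast; omega)
    · have : (z : ℝ) < 0 := by exact_mod_cast h
      linarith
  -- 2j ≤ γ
  have h2jγ : (2 * j : ℝ) ≤ γ := by
    have := (Nat.le_floor_iff (by positivity : (0:ℝ) ≤ γ / 2)).mp hj2
    linarith
  have h2jF : (2 * j : ℕ) ≤ Nat.floor γ := Nat.le_floor (by push_cast; exact h2jγ)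
  have h2jFR : (2 * j : ℝ) ≤ F := by rw [hF]; exact_mod_cast h2jF
  have hFle : F ≤ γ := Nat.floor_le hγ0.le
  have hFlt : γ < F + 1 := Nat.lt_floor_add_one γ
  have hfrac0 : 0 < γ - F := by
    rcases lt_or_eq_of_le hFle with h | h
    · linarith
    · exact absurd h.symm (hint (Nat.floor γ))
  have hfrac1 : γ - F < 1 := by linarith
  -- rewrite the operator part
  rw [radProd_rpow n ((n : ℝ) + 1 - γ + 2 * j) _ (Set.mem_Ioi.mpr hρ)]
  have hexp : ρ ^ (-(n : ℝ) - 1 + γ - 2 * j) * ρ ^ ((n : ℝ) + 1 - γ + 2 * j) = 1 := by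
    rw [← Real.rpow_add hρ]; norm_num
  have hA : (n : ℝ) + 1 - γ + 2 * j - n - 1 = 2 * j - γ := by ring
  have key : ∀ X : ℝ, ρ ^ (-(n : ℝ) - 1 + γ - 2 * j) *
      (X * ρ ^ ((n : ℝ) + 1 - γ + 2 * j)) = X := by
    intro X
    rw [show ρ ^ (-(n : ℝ) - 1 + γ - 2 * j) * (X * ρ ^ ((n : ℝ) + 1 - γ + 2 * j))
        = X * (ρ ^ (-(n : ℝ) - 1 + γ - 2 * j) * ρ ^ ((n : ℝ) + 1 - γ + 2 * j)) from by ring,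
      hexp, mul_one]
  simp only [hA, key, bind_pure_comp, List.map_eq_map, List.map_append, List.prod_append, List.map_map]
  rw [list_prod_range, list_prod_range]
  simp only [Function.comp_apply]
  -- Gamma rewrites
  have eA : γ + 1 - (j : ℝ) = (γ + 1 - 2 * j) + (j : ℕ) := by push_cast; ring
  have eB : F + 1 - (j : ℝ) = (F + 1 - 2 * j) + (j : ℕ) := by push_cast; ring
  have eC : (j : ℝ) + 1 - (γ - F) = (1 - (γ - F)) + (j : ℕ) := by push_cast; ring
  have hxA : ∀ i : ℕ, i < j → γ + 1 - 2 * j + i ≠ 0 := by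
    intro i _ h
    exact hint (2 * j - 1 - i) (by push_cast; linarith)
  have hxB : ∀ i : ℕ, i < j → F + 1 - 2 * j + i ≠ 0 := by
    intro i _ h
    have hi0 : (0:ℝ) ≤ i := Nat.cast_nonneg i
    linarith
  have hxC : ∀ i : ℕ, i < j → 1 - (γ - F) + i ≠ 0 := by
    intro i _ h
    have hi0 : (0:ℝ) ≤ i := Nat.cast_nonneg i
    linarith
  rw [eA, eB, eC, gamma_shift _ j hxA, gamma_shift _ j hxB, gamma_shift _ j hxC]
  have hGA : Real.Gamma (γ + 1 - 2 * j) ≠ 0 := by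
    apply Real.Gamma_ne_zero
    intro m h
    exact hint (2 * j - 1 - m) (by push_cast; linarith)
  have hGB : Real.Gamma (F + 1 - 2 * j) ≠ 0 :=
    Real.Gamma_ne_zero fun m => by
      have : (0:ℝ) ≤ m := Nat.cast_nonneg m
      intro h; nlinarith
  have hGC : Real.Gamma (1 - (γ - F)) ≠ 0 :=
    Real.Gamma_ne_zero fun m => by
      have : (0:ℝ) ≤ m := Nat.cast_nonneg m
      intro h; nlinarith
  have hfact : (Nat.factorial j : ℝ) = ∏ i ∈ Finset.range j, ((i : ℝ) + 1) := by
    rw [← Finset.prod_range_add_one_eq_factorial]; push_cast; ring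
  have h4 : (4 : ℝ) ^ (2 * j) = ∏ _i ∈ Finset.range j, (16 : ℝ) := by
    rw [Finset.prod_const, Finset.card_range, pow_mul]; norm_num
  have main : (∏ ℓ ∈ Finset.range j, ((2 * (j:ℝ) - γ) ^ 2 - (γ - 2 * ℓ) ^ 2)) *
      (∏ ℓ ∈ Finset.range j, ((2 * (j:ℝ) - γ) ^ 2 - (γ + 2 * ℓ - 2 * F) ^ 2)) =
      (4:ℝ) ^ (2 * j) * (Nat.factorial j) *
        ((∏ i ∈ Finset.range j, (γ + 1 - 2 * j + i)) *
          (∏ i ∈ Finset.range j, (F + 1 - 2 * j + i)) *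
          (∏ i ∈ Finset.range j, (1 - (γ - F) + i))) := by
    rw [hfact, h4, ← Finset.prod_mul_distrib, ← Finset.prod_mul_distrib,
      ← Finset.prod_mul_distrib, ← Finset.prod_mul_distrib, ← Finset.prod_mul_distrib,
      ← Finset.prod_range_reflect (fun ℓ => ((2 * (j:ℝ) - γ) ^ 2 - (γ - 2 * ℓ) ^ 2) *
        ((2 * (j:ℝ) - γ) ^ 2 - (γ + 2 * ℓ - 2 * F) ^ 2)) j]
    apply Finset.prod_congr rfl
    intro i hi
    have hij : i + 1 ≤ j := Finset.mem_range.mp hi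
    have hcast : ((j - 1 - i : ℕ) : ℝ) = (j : ℝ) - 1 - i := by
      rw [Nat.sub_sub, Nat.cast_sub (by omega)]
      push_cast; ring
    rw [hcast]
    ring
  rw [main]
  field_simp

end
end

section
/- Let γ ∈ (0,∞) \ ℕ and let j be an integer with 0 ≤ j ≤ ⌊γ⌋. Then (−1)^{⌊γ⌋} · ∏_{i ∈ {0,1,…,⌊γ⌋}, i ≠ j} ( (γ−2j)² − (γ−2i)² ) = 4^{⌊γ⌋} · j! · (⌊γ⌋−j)! · Γ(γ+1−j) Γ(j+1−[γ]) / ( Γ(γ+1−2j) Γ(2j+1−γ) ). (Since γ is not an integer, all Gamma arguments on the right are non-integers, so both sides are well defined.) -/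
noncomputable section

private lemma gamma_add_nat (x : ℝ) (hx : ∀ m : ℕ, x ≠ -m) (m : ℕ) :
    Real.Gamma (x + m) = (∏ k ∈ Finset.range m, (x + k)) * Real.Gamma x := by
  induction m with
  | zero => simp
  | succ m ih =>
    have h0 : x + m ≠ 0 := by
      intro h
      exact hx m (by linarith)
    have : x + (m + 1 : ℕ) = (x + m) + 1 := by push_cast; ring
    rw [this, Real.Gamma_add_one h0, ih, Finset.prod_range_succ]
    ring

theorem stmt3 (γ : ℝ) (hγ0 : 0 < γ) (hγ : ∀ m : ℕ, γ ≠ m)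
    (j : ℕ) (hj : j ≤ Nat.floor γ) :
    (-1 : ℝ) ^ (Nat.floor γ) *
        ∏ i ∈ (Finset.range (Nat.floor γ + 1)).erase j,
          ((γ - 2 * j) ^ 2 - (γ - 2 * i) ^ 2)
      = 4 ^ (Nat.floor γ) * (Nat.factorial j) * (Nat.factorial (Nat.floor γ - j)) *
          Real.Gamma (γ + 1 - j) * Real.Gamma ((j : ℝ) + 1 - (γ - Nat.floor γ)) /
          (Real.Gamma (γ + 1 - 2 * j) * Real.Gamma (2 * j + 1 - γ)) := by
  set n := Nat.floor γ with hn
  -- γ is not any integer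
  have hInt : ∀ z : ℤ, γ ≠ (z : ℝ) := by
    intro z h
    rcases le_or_gt 0 z with hz | hz
    · lift z to ℕ using hz
      exact hγ z (by exact_mod_cast h)
    · have : (z : ℝ) < 0 := by exact_mod_cast hz
      linarith
  -- set x, y
  set x : ℝ := γ + 1 - 2 * j with hxdef
  set y : ℝ := 2 * j + 1 - γ with hydef
  have hx : ∀ m : ℕ, x ≠ -m := by
    intro m h
    exact hInt (2 * j - 1 - m) (by push_cast; linarith [h])
  have hy : ∀ m : ℕ, y ≠ -m := by
    intro m h
    exact hInt (2 * j + 1 + m) (by push_cast; linarith [h])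
  have hΓx : Real.Gamma x ≠ 0 := Real.Gamma_ne_zero (fun m => hx m)
  have hΓy : Real.Gamma y ≠ 0 := Real.Gamma_ne_zero (fun m => hy m)
  -- Gamma expansions
  have hG1 : Real.Gamma (γ + 1 - j) =
      (∏ k ∈ Finset.range j, (x + k)) * Real.Gamma x := by
    have : γ + 1 - j = x + j := by rw [hxdef]; push_cast; ring
    rw [this, gamma_add_nat x hx j]
  have hG2 : Real.Gamma ((j : ℝ) + 1 - (γ - n)) =
      (∏ k ∈ Finset.range (n - j), (y + k)) * Real.Gamma y := by
    have : (j : ℝ) + 1 - (γ - n) = y + (n - j : ℕ) := by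
      rw [hydef]
      have : ((n - j : ℕ) : ℝ) = (n : ℝ) - j := by
        push_cast [Nat.cast_sub hj]; ring
      rw [this]; ring
    rw [this, gamma_add_nat y hy (n - j)]
  -- decompose the erased range
  have hsplit : (Finset.range (n + 1)).erase j
      = Finset.range j ∪ Finset.Ico (j + 1) (n + 1) := by
    ext i
    simp only [Finset.mem_erase, Finset.mem_range, Finset.mem_union, Finset.mem_Ico]
    omega
  have hdisj : Disjoint (Finset.range j) (Finset.Ico (j + 1) (n + 1)) := by
    rw [Finset.disjoint_left]
    intro i hi hi'
    simp only [Finset.mem_range] at hi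
    simp only [Finset.mem_Ico] at hi'
    omega
  -- factor each term of the product
  have hfac : ∀ i ∈ (Finset.range (n + 1)).erase j,
      (γ - 2 * i) ^ 2 = (γ - 2 * i) ^ 2 := fun _ _ => rfl
  have hprod : ∏ i ∈ (Finset.range (n + 1)).erase j,
      ((γ - 2 * j) ^ 2 - (γ - 2 * i) ^ 2)
      = ∏ i ∈ (Finset.range (n + 1)).erase j,
        (4 * (((i : ℝ) - j) * (γ - i - j))) := by
    apply Finset.prod_congr rfl
    intro i _
    ring
  rw [hprod, hsplit, Finset.prod_union hdisj]
  simp only [Finset.prod_mul_distrib, Finset.prod_const]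
  -- compute the pieces
  have hA1 : ∏ i ∈ Finset.range j, ((i : ℝ) - j) = (-1) ^ j * j.factorial := by
    have : ∏ i ∈ Finset.range j, ((i : ℝ) - j)
        = ∏ i ∈ Finset.range j, (-1) * ((j - i : ℕ) : ℝ) := by
      apply Finset.prod_congr rfl
      intro i hi
      simp only [Finset.mem_range] at hi
      rw [Nat.cast_sub hi.le]
      ring
    rw [this, Finset.prod_mul_distrib, Finset.prod_const, Finset.card_range,
      ← Nat.cast_prod]
    congr 1
    have : ∏ i ∈ Finset.range j, (j - i) = ∏ i ∈ Finset.range j, (i + 1) := by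
      rw [← Finset.prod_range_reflect]
      apply Finset.prod_congr rfl
      intro i hi
      simp only [Finset.mem_range] at hi
      omega
    rw [this, Finset.prod_range_add_one_eq_factorial]
  have hA2 : ∏ i ∈ Finset.Ico (j + 1) (n + 1), ((i : ℝ) - j)
      = (n - j).factorial := by
    rw [Finset.prod_Ico_eq_prod_range]
    have h1 : n + 1 - (j + 1) = n - j := by omega
    rw [h1]
    have : ∏ k ∈ Finset.range (n - j), (((j + 1 + k : ℕ) : ℝ) - j)
        = ∏ k ∈ Finset.range (n - j), ((k + 1 : ℕ) : ℝ) := by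
      apply Finset.prod_congr rfl
      intro k _
      push_cast
      ring
    rw [this, ← Nat.cast_prod, Finset.prod_range_add_one_eq_factorial]
  have hB1 : ∏ i ∈ Finset.range j, (γ - i - j) = ∏ k ∈ Finset.range j, (x + k) := by
    rw [← Finset.prod_range_reflect (fun k => x + k) j]
    apply Finset.prod_congr rfl
    intro i hi
    simp only [Finset.mem_range] at hi
    have : ((j - 1 - i : ℕ) : ℝ) = (j : ℝ) - 1 - i := by
      have h1 : j - 1 - i = j - (1 + i) := by omega
      rw [h1, Nat.cast_sub (by omega)]
      push_cast; ring
    rw [this, hxdef]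
    ring
  have hB2 : ∏ i ∈ Finset.Ico (j + 1) (n + 1), (γ - i - j)
      = (-1) ^ (n - j) * ∏ k ∈ Finset.range (n - j), (y + k) := by
    rw [Finset.prod_Ico_eq_prod_range]
    have h1 : n + 1 - (j + 1) = n - j := by omega
    rw [h1]
    have : ∏ k ∈ Finset.range (n - j), (γ - ((j + 1 + k : ℕ) : ℝ) - j)
        = ∏ k ∈ Finset.range (n - j), (-1) * (y + k) := by
      apply Finset.prod_congr rfl
      intro k _
      rw [hydef]
      push_cast
      ring
    rw [this, Finset.prod_mul_distrib, Finset.prod_const, Finset.card_range]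
  rw [hA1, hA2, hB1, hB2, hG1, hG2]
  rw [Finset.card_range, Nat.card_Ico]
  have h1 : n + 1 - (j + 1) = n - j := by omega
  rw [h1]
  have hsign : (-1 : ℝ) ^ n * ((-1) ^ j * (-1) ^ (n - j)) = 1 := by
    rw [← pow_add, show j + (n - j) = n from by omega, ← pow_add, ← two_mul,
      pow_mul]
    norm_num
  have h4 : (4 : ℝ) ^ j * 4 ^ (n - j) = 4 ^ n := by
    rw [← pow_add, show j + (n - j) = n from by omega]
  rw [eq_div_iff (mul_ne_zero hΓx hΓy)]
  set C := ∏ k ∈ Finset.range j, (x + (k : ℝ)) with hC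
  set D := ∏ k ∈ Finset.range (n - j), (y + (k : ℝ)) with hD
  linear_combination ((-1 : ℝ) ^ n * (-1) ^ j * (-1) ^ (n - j) *
      ((j.factorial : ℝ) * (n - j).factorial * C * D * Real.Gamma x * Real.Gamma y)) * h4
    + ((4 : ℝ) ^ n * ((j.factorial : ℝ) * (n - j).factorial * C * D *
      Real.Gamma x * Real.Gamma y)) * hsign
end
end
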